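/- For integers n > 1 and p with 1 < p < n and p | n, the sets A = { n^i : i ≥ 0 } and F = { n^{2i} : i ≥ 0 } ∪ { n^{2i+1} p : i ≥ 0 } are inequivalent under truncated division: there are no r, r' with A/r = F/r'. -/

import Mathlib

/-- `S/r`: the image of `S ⊆ ℕ` under truncated division `m ↦ m / gcd(r,m)`. -/
def truncDiv (S : Set ℕ) (r : ℕ) : Set ℕ := (fun m => m / Nat.gcd r m) '' S

private lemma gcd_pow_stab (r n : ℕ) (hr : 0 < r) :
    ∃ K, ∀ k, K ≤ k → Nat.gcd r (n ^ k) = Nat.gcd r (n ^ K) := by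
  set f : ℕ → ℕ := fun k => Nat.gcd r (n ^ k) with hf
  have hb : BddAbove (Set.range f) := ⟨r, by
    rintro x ⟨k, rfl⟩; exact Nat.le_of_dvd hr (Nat.gcd_dvd_left _ _)⟩
  obtain ⟨K, hK⟩ := Nat.sSup_mem (Set.range_nonempty f) hb
  refine ⟨K, fun k hk => ?_⟩
  have mono : f K ≤ f k :=
    Nat.le_of_dvd (Nat.gcd_pos_of_pos_left _ hr)
      (Nat.dvd_gcd (Nat.gcd_dvd_left _ _)
        ((Nat.gcd_dvd_right _ _).trans (pow_dvd_pow n hk)))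
  have h2 : f k ≤ sSup (Set.range f) := le_csSup hb ⟨k, rfl⟩
  simp only [f] at *
  omega

/-- For `1 < p < n` with `p ∣ n`, the sets `A = {n^i}` and
`F = {n^{2i}} ∪ {n^{2i+1}·p}` are inequivalent under truncated division. -/
theorem depthProfiles_G1_G3_inequivalent' (n p : ℕ) (hn : 1 < n) (hp : 1 < p)
    (hpn : p < n) (hdvd : p ∣ n) :
    ¬ ∃ r r' : ℕ, 0 < r ∧ 0 < r' ∧
      truncDiv {m | ∃ i : ℕ, m = n ^ i} r
        = truncDiv ({m | ∃ i : ℕ, m = n ^ (2 * i)}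
            ∪ {m | ∃ i : ℕ, m = n ^ (2 * i + 1) * p}) r' := by
  rintro ⟨r, r', hr, hr', hEq⟩
  obtain ⟨K', hK'⟩ := gcd_pow_stab r n hr
  obtain ⟨K, hK⟩ := gcd_pow_stab r' n hr'
  set g' := Nat.gcd r (n ^ K') with hg'
  set g := Nat.gcd r' (n ^ K) with hg
  have hn0 : 0 < n := by omega
  set i := K + K' + r' + 1 with hi
  have hgle : g ≤ r' := Nat.le_of_dvd hr' (Nat.gcd_dvd_left _ _)
  have hgpos : 0 < g := Nat.gcd_pos_of_pos_left _ hr'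
  have hg'pos : 0 < g' := Nat.gcd_pos_of_pos_left _ hr
  have hgx : Nat.gcd r' (n ^ (2 * i)) = g := hK _ (by omega)
  have hgy : Nat.gcd r' (n ^ (2 * i + 1) * p) = g := by
    have h1 : g ∣ Nat.gcd r' (n ^ (2 * i + 1) * p) := by
      rw [← hK (2 * i + 1) (by omega)]
      exact Nat.dvd_gcd (Nat.gcd_dvd_left _ _)
        ((Nat.gcd_dvd_right _ _).trans (Dvd.intro p rfl))
    have h2 : Nat.gcd r' (n ^ (2 * i + 1) * p) ∣ g := by
      rw [← hK (2 * i + 2) (by omega)]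
      refine Nat.dvd_gcd (Nat.gcd_dvd_left _ _) ?_
      refine (Nat.gcd_dvd_right _ _).trans ?_
      have h3 : n ^ (2 * i + 1) * p ∣ n ^ (2 * i + 1) * n := mul_dvd_mul_left _ hdvd
      calc n ^ (2 * i + 1) * p ∣ n ^ (2 * i + 1) * n := h3
        _ = n ^ (2 * i + 2) := by ring
    exact Nat.dvd_antisymm h2 h1
  -- size estimate
  have hsize : n ^ K' * g < n ^ (2 * i) := by
    calc n ^ K' * g ≤ n ^ K' * r' := Nat.mul_le_mul_left _ hgle
      _ < n ^ K' * n ^ r' := by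
          have h1 : r' < n ^ r' := Nat.lt_pow_self hn
          exact mul_lt_mul_of_pos_left h1 (Nat.pow_pos hn0)
      _ = n ^ (K' + r') := (pow_add n K' r').symm
      _ ≤ n ^ (2 * i) := Nat.pow_le_pow_right hn0 (by omega)
  have hdx : g ∣ n ^ (2 * i) := hgx ▸ Nat.gcd_dvd_right r' _
  have hdy : g ∣ n ^ (2 * i + 1) * p := hgy ▸ Nat.gcd_dvd_right r' _
  -- the two large elements of F/r' are in A/r
  have hxF : n ^ (2 * i) / g ∈ truncDiv ({m | ∃ i : ℕ, m = n ^ (2 * i)}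
      ∪ {m | ∃ i : ℕ, m = n ^ (2 * i + 1) * p}) r' :=
    ⟨n ^ (2 * i), Or.inl ⟨i, rfl⟩, by simp [hgx]⟩
  have hyF : n ^ (2 * i + 1) * p / g ∈ truncDiv ({m | ∃ i : ℕ, m = n ^ (2 * i)}
      ∪ {m | ∃ i : ℕ, m = n ^ (2 * i + 1) * p}) r' :=
    ⟨n ^ (2 * i + 1) * p, Or.inr ⟨i, rfl⟩, by simp [hgy]⟩
  rw [← hEq] at hxF hyF
  obtain ⟨mx, ⟨j, hj⟩, hxeq⟩ := hxF
  obtain ⟨my, ⟨j', hj'⟩, hyeq⟩ := hyF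
  subst hj; subst hj'
  simp only at hxeq hyeq
  -- j is large, so gcd(r, n^j) = g'
  have hxbig : n ^ K' < n ^ (2 * i) / g := (Nat.lt_div_iff_mul_lt' hdx _).2 (by rw [mul_comm]; exact hsize)
  have hybig : n ^ K' < n ^ (2 * i + 1) * p / g := by
    refine (Nat.lt_div_iff_mul_lt' hdy _).2 ?_
    rw [mul_comm]
    calc n ^ K' * g < n ^ (2 * i) := hsize
      _ ≤ n ^ (2 * i + 1) * p := by
          calc n ^ (2 * i) ≤ n ^ (2 * i + 1) := Nat.pow_le_pow_right hn0 (by omega)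
            _ ≤ n ^ (2 * i + 1) * p := Nat.le_mul_of_pos_right _ (by omega)
  have hjK : K' ≤ j := by
    by_contra hc
    push_neg at hc
    have h1 : n ^ j / Nat.gcd r (n ^ j) ≤ n ^ K' :=
      (Nat.div_le_self _ _).trans (Nat.pow_le_pow_right hn0 (by omega))
    omega
  have hjK' : K' ≤ j' := by
    by_contra hc
    push_neg at hc
    have h1 : n ^ j' / Nat.gcd r (n ^ j') ≤ n ^ K' :=
      (Nat.div_le_self _ _).trans (Nat.pow_le_pow_right hn0 (by omega))
    omega
  rw [hK' j hjK] at hxeq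
  rw [hK' j' hjK'] at hyeq
  have hdj : g' ∣ n ^ j := by rw [← hK' j hjK]; exact Nat.gcd_dvd_right r _
  have hdj' : g' ∣ n ^ j' := by rw [← hK' j' hjK']; exact Nat.gcd_dvd_right r _
  -- cross-multiplied equations
  have e1 : n ^ (2 * i) * g' = n ^ j * g := by
    calc n ^ (2 * i) * g' = (n ^ (2 * i) / g * g) * g' := by rw [Nat.div_mul_cancel hdx]
      _ = (n ^ j / g' * g') * g := by rw [← hxeq]; ring
      _ = n ^ j * g := by rw [Nat.div_mul_cancel hdj]
  have e2 : n ^ (2 * i + 1) * p * g' = n ^ j' * g := by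
    calc n ^ (2 * i + 1) * p * g'
        = (n ^ (2 * i + 1) * p / g * g) * g' := by rw [Nat.div_mul_cancel hdy]
      _ = (n ^ j' / g' * g') * g := by rw [← hyeq]; ring
      _ = n ^ j' * g := by rw [Nat.div_mul_cancel hdj']
  have key : n ^ j' = n ^ (j + 1) * p := by
    have h1 : n ^ j' * g = n ^ (j + 1) * p * g := by
      calc n ^ j' * g = n ^ (2 * i + 1) * p * g' := e2.symm
        _ = n * p * (n ^ (2 * i) * g') := by ring
        _ = n * p * (n ^ j * g) := by rw [e1]
        _ = n ^ (j + 1) * p * g := by ring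
    exact Nat.eq_of_mul_eq_mul_right hgpos h1
  have h1 : n ^ (j + 1) < n ^ j' := by
    calc n ^ (j + 1) < n ^ (j + 1) * p := by
          have : 0 < n ^ (j + 1) := Nat.pow_pos hn0
          calc n ^ (j + 1) = n ^ (j + 1) * 1 := (mul_one _).symm
            _ < n ^ (j + 1) * p := mul_lt_mul_of_pos_left hp this
      _ = n ^ j' := key.symm
  have h2 : j + 2 ≤ j' := by
    by_contra hc
    push_neg at hc
    have := Nat.pow_le_pow_right hn0 (show j' ≤ j + 1 by omega)
    omega
  have h3 : n ^ (j + 2) ≤ n ^ j' := Nat.pow_le_pow_right hn0 h2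
  have h4 : n ^ j' < n ^ (j + 2) := by
    calc n ^ j' = n ^ (j + 1) * p := key
      _ < n ^ (j + 1) * n := mul_lt_mul_of_pos_left hpn (Nat.pow_pos hn0)
      _ = n ^ (j + 2) := by ring
  omega
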